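/- Define R_n ⊆ ℕ recursively by R_2 = {0,1,2} and R_{n+1} = R_n ∪ {2M+1, 2M+1+r : r ∈ R_n∖{0}} where M = max R_n, with addition a ⊕ b = max{ r ∈ R_n : r ≤ a + b }. Then each R_n is a distance monoid with arch(R_n) = n, while the longest arithmetic progression {r, 2r, …, kr} of distinct elements in R_n has length at most 2. -/

import Mathlib

/-- `a ⊕ b`: the largest element of the carrier `S` not exceeding `a + b`. -/
def dop (S : Finset ℕ) (a b : ℕ) : ℕ :=
  WithBot.unbotD 0 ((S.filter (fun r => r ≤ a + b)).max)

/-- The recursively defined carriers: `Rcar 0 = R_2 = {0,1,2}` and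
`R_{n+1} = R_n ∪ {2M + 1 + r : r ∈ R_n}` where `M = max R_n`
(note `{2M+1} ∪ {2M+1+r : r ∈ R_n∖{0}} = {2M+1+r : r ∈ R_n}`). -/
def Rcar : ℕ → Finset ℕ
  | 0 => {0, 1, 2}
  | (m + 1) => Rcar m ∪ (Rcar m).image (fun r => 2 * (WithBot.unbotD 0 (Rcar m).max) + 1 + r)

/-- `m`-fold `⊕`-sum of `r` over the carrier `S`. -/
def dopN (S : Finset ℕ) : ℕ → ℕ → ℕ
  | 0, _ => 0
  | (m + 1), r => dop S r (dopN S m r)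

/-- `⊕`-sum of a list over the carrier `S`. -/
def dopSum (S : Finset ℕ) : List ℕ → ℕ
  | [] => 0
  | a :: l => dop S a (dopSum S l)

/-- The Archimedean condition at level `m` for the carrier `S`: every chain
`r₀ ≤ ⋯ ≤ r_m` in `S` satisfies `r₀ ⊕ ⋯ ⊕ r_m = r₁ ⊕ ⋯ ⊕ r_m`. -/
def archAtOn (S : Finset ℕ) (m : ℕ) : Prop :=
  ∀ f : ℕ → ℕ, (∀ i, f i ∈ S) → (∀ i j, i ≤ j → f i ≤ f j) →
    dopSum S ((List.range (m + 1)).map f) =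
      dopSum S ((List.range m).map (fun i => f (i + 1)))

namespace St16

/-- floor to the carrier -/
def fl (S : Finset ℕ) (x : ℕ) : ℕ := WithBot.unbotD 0 ((S.filter (fun r => r ≤ x)).max)

theorem dop_eq (S : Finset ℕ) (a b : ℕ) : dop S a b = fl S (a + b) := rfl

section basic
variable {S : Finset ℕ}

theorem fl_spec (h0 : 0 ∈ S) (x : ℕ) : fl S x ∈ S ∧ fl S x ≤ x := by
  have hne : (S.filter (fun r => r ≤ x)).Nonempty := ⟨0, by simp [h0]⟩
  obtain ⟨b, hb⟩ := Finset.max_of_nonempty hne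
  have hmem := Finset.mem_of_max hb
  have hfl : fl S x = b := by rw [fl, hb]; rfl
  rw [hfl]
  exact ⟨(Finset.mem_filter.mp hmem).1, (Finset.mem_filter.mp hmem).2⟩

theorem fl_mem (h0 : 0 ∈ S) (x : ℕ) : fl S x ∈ S := (fl_spec h0 x).1

theorem fl_le (h0 : 0 ∈ S) (x : ℕ) : fl S x ≤ x := (fl_spec h0 x).2

theorem le_fl (h0 : 0 ∈ S) {s : ℕ} (hs : s ∈ S) {x : ℕ} (hle : s ≤ x) : s ≤ fl S x := by
  have hne : (S.filter (fun r => r ≤ x)).Nonempty := ⟨0, by simp [h0]⟩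
  obtain ⟨b, hb⟩ := Finset.max_of_nonempty hne
  have hfl : fl S x = b := by rw [fl, hb]; rfl
  rw [hfl]
  have : (s : WithBot ℕ) ≤ (S.filter (fun r => r ≤ x)).max :=
    Finset.le_max (Finset.mem_filter.mpr ⟨hs, hle⟩)
  rw [hb] at this
  exact WithBot.coe_le_coe.mp this

theorem fl_unique (h0 : 0 ∈ S) {a x : ℕ} (ha : a ∈ S) (hax : a ≤ x)
    (hub : ∀ s ∈ S, s ≤ x → s ≤ a) : fl S x = a :=
  le_antisymm (hub _ (fl_mem h0 x) (fl_le h0 x)) (le_fl h0 ha hax)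

theorem fl_eq_self (h0 : 0 ∈ S) {a : ℕ} (ha : a ∈ S) : fl S a = a :=
  fl_unique h0 ha le_rfl (fun _ _ hs => hs)

theorem fl_mono (h0 : 0 ∈ S) {x y : ℕ} (h : x ≤ y) : fl S x ≤ fl S y :=
  le_fl h0 (fl_mem h0 x) ((fl_le h0 x).trans h)

end basic

/-- max of the carrier -/
def Mx (k : ℕ) : ℕ := WithBot.unbotD 0 (Rcar k).max

theorem Rcar_succ (k : ℕ) :
    Rcar (k + 1) = Rcar k ∪ (Rcar k).image (fun r => 2 * Mx k + 1 + r) := rfl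

theorem zero_mem : ∀ k, (0 : ℕ) ∈ Rcar k := by
  intro k; induction k with
  | zero => decide
  | succ k ih => rw [Rcar_succ]; exact Finset.mem_union_left _ ih

theorem subset_succ (k : ℕ) : Rcar k ⊆ Rcar (k + 1) := by
  rw [Rcar_succ]; exact Finset.subset_union_left

theorem one_mem : ∀ k, (1 : ℕ) ∈ Rcar k := by
  intro k; induction k with
  | zero => decide
  | succ k ih => exact subset_succ k ih

theorem two_mem : ∀ k, (2 : ℕ) ∈ Rcar k := by
  intro k; induction k with
  | zero => decide
  | succ k ih => exact subset_succ k ih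

theorem unbot_max_eq {S : Finset ℕ} {a : ℕ} (ha : a ∈ S) (hub : ∀ s ∈ S, s ≤ a) :
    WithBot.unbotD 0 S.max = a := by
  obtain ⟨b, hb⟩ := Finset.max_of_mem ha
  have hmem := Finset.mem_of_max hb
  have h1 : (a : WithBot ℕ) ≤ S.max := Finset.le_max ha
  rw [hb] at h1
  have h1' : a ≤ b := WithBot.coe_le_coe.mp h1
  have : b = a := le_antisymm (hub _ hmem) h1'
  rw [hb]; simp [this]

theorem le_Mx {k : ℕ} {s : ℕ} (hs : s ∈ Rcar k) : s ≤ Mx k := by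
  have : (s : WithBot ℕ) ≤ (Rcar k).max := Finset.le_max hs
  obtain ⟨b, hb⟩ := Finset.max_of_mem hs
  rw [hb] at this
  have hsb : s ≤ b := WithBot.coe_le_coe.mp this
  rw [Mx, hb]; simpa

theorem Mx_mem (k : ℕ) : Mx k ∈ Rcar k := by
  obtain ⟨b, hb⟩ := Finset.max_of_mem (zero_mem k)
  have := Finset.mem_of_max hb
  rw [Mx, hb]; simpa

theorem Mx0 : Mx 0 = 2 := unbot_max_eq (by decide) (by decide)

theorem mem_succ {k s : ℕ} :
    s ∈ Rcar (k + 1) ↔ s ∈ Rcar k ∨ ∃ r ∈ Rcar k, s = 2 * Mx k + 1 + r := by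
  rw [Rcar_succ, Finset.mem_union, Finset.mem_image]
  constructor
  · rintro (h | ⟨r, hr, hrs⟩)
    · exact Or.inl h
    · exact Or.inr ⟨r, hr, hrs.symm⟩
  · rintro (h | ⟨r, hr, hrs⟩)
    · exact Or.inl h
    · exact Or.inr ⟨r, hr, hrs.symm⟩

theorem old_of_le {k s : ℕ} (h : s ∈ Rcar (k + 1)) (hle : s ≤ 2 * Mx k) :
    s ∈ Rcar k := by
  rcases mem_succ.mp h with h' | ⟨r, _, rfl⟩
  · exact h'
  · omega

theorem fl_succ_low {k x : ℕ} (hx : x ≤ 2 * Mx k) :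
    fl (Rcar (k + 1)) x = fl (Rcar k) x := by
  apply fl_unique (zero_mem (k + 1)) (subset_succ k (fl_mem (zero_mem k) x))
    (fl_le (zero_mem k) x)
  intro s hs hsx
  exact le_fl (zero_mem k) (old_of_le hs (hsx.trans hx)) hsx

theorem fl_succ_high (k c : ℕ) :
    fl (Rcar (k + 1)) (2 * Mx k + 1 + c) = 2 * Mx k + 1 + fl (Rcar k) c := by
  apply fl_unique (zero_mem (k + 1))
  · exact mem_succ.mpr (Or.inr ⟨fl (Rcar k) c, fl_mem (zero_mem k) c, rfl⟩)
  · have := fl_le (zero_mem k) c; omega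
  · intro s hs hsx
    rcases mem_succ.mp hs with h' | ⟨r, hr, rfl⟩
    · have := le_Mx h'; omega
    · have : r ≤ c := by omega
      have := le_fl (zero_mem k) hr this; omega

theorem fl_of_ge {k x : ℕ} (h : Mx k ≤ x) : fl (Rcar k) x = Mx k :=
  fl_unique (zero_mem k) (Mx_mem k) h (fun _ hs _ => le_Mx hs)

theorem fl_le_Mx (k x : ℕ) : fl (Rcar k) x ≤ Mx k := le_Mx (fl_mem (zero_mem k) x)

theorem Mx_succ (k : ℕ) : Mx (k + 1) = 3 * Mx k + 1 := by
  have h : Mx (k + 1) = 2 * Mx k + 1 + Mx k := by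
    apply unbot_max_eq
    · exact mem_succ.mpr (Or.inr ⟨Mx k, Mx_mem k, rfl⟩)
    · intro s hs
      rcases mem_succ.mp hs with h' | ⟨r, hr, rfl⟩
      · have := le_Mx h'; omega
      · have := le_Mx hr; omega
  omega

theorem fl0 (x : ℕ) : fl (Rcar 0) x = min x 2 := by
  rcases le_or_gt 2 x with h | h
  · rw [fl_of_ge (by rw [Mx0]; exact h), Mx0]; omega
  · interval_cases x <;> decide

/-! ### folds -/

def Fl (S : Finset ℕ) (l : List ℕ) (t : ℕ) : ℕ := l.foldr (dop S) t

theorem dopSum_eq_Fl (S : Finset ℕ) (l : List ℕ) : dopSum S l = Fl S l 0 := by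
  induction l with
  | nil => rfl
  | cons a l ih => simp [dopSum, Fl, List.foldr_cons] at *; rw [ih]

theorem Fl_nil (S : Finset ℕ) (t : ℕ) : Fl S [] t = t := rfl

theorem Fl_cons (S : Finset ℕ) (a : ℕ) (l : List ℕ) (t : ℕ) :
    Fl S (a :: l) t = dop S a (Fl S l t) := rfl

theorem Fl_append (S : Finset ℕ) (l : List ℕ) (a t : ℕ) :
    Fl S (l ++ [a]) t = Fl S l (dop S a t) := by
  simp [Fl, List.foldr_append]

theorem Fl_top (k : ℕ) : ∀ l : List ℕ, Fl (Rcar k) l (Mx k) = Mx k := by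
  intro l; induction l with
  | nil => rfl
  | cons a l ih =>
    rw [Fl_cons, ih, dop_eq, fl_of_ge (by omega)]

theorem Fl_shift (k : ℕ) (l : List ℕ) (s : ℕ) :
    Fl (Rcar (k + 1)) l (2 * Mx k + 1 + s) = 2 * Mx k + 1 + Fl (Rcar k) l s := by
  induction l with
  | nil => rfl
  | cons a l ih =>
    rw [Fl_cons, Fl_cons, ih, dop_eq, dop_eq,
      show a + (2 * Mx k + 1 + Fl (Rcar k) l s) = 2 * Mx k + 1 + (a + Fl (Rcar k) l s) by ring,
      fl_succ_high]

theorem Fl_mem {S : Finset ℕ} (h0 : 0 ∈ S) {t : ℕ} (ht : t ∈ S) (l : List ℕ) :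
    Fl S l t ∈ S := by
  cases l with
  | nil => exact ht
  | cons a l => rw [Fl_cons, dop_eq]; exact fl_mem h0 _

theorem Fl_down (k : ℕ) : ∀ (l : List ℕ), (∀ x ∈ l, x ∈ Rcar k) → ∀ t, t ∈ Rcar k →
    Fl (Rcar (k + 1)) l t = Fl (Rcar k) l t := by
  intro l; induction l with
  | nil => intro _ t _; rfl
  | cons a l ih =>
    intro hl t ht
    have ha : a ∈ Rcar k := hl a (by simp)
    have hFl : Fl (Rcar k) l t ∈ Rcar k := Fl_mem (zero_mem k) ht l
    rw [Fl_cons, Fl_cons, ih (fun x hx => hl x (by simp [hx])) t ht, dop_eq, dop_eq]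
    exact fl_succ_low (by have := le_Mx ha; have := le_Mx hFl; omega)

/-! ### ranges -/

def L (f : ℕ → ℕ) (m : ℕ) : List ℕ := (List.range m).map f

theorem L_succ (f : ℕ → ℕ) (m : ℕ) : L f (m + 1) = L f m ++ [f m] := by
  simp [L, List.range_succ]

theorem L_congr {f g : ℕ → ℕ} {m : ℕ} (h : ∀ i < m, f i = g i) : L f m = L g m := by
  unfold L
  apply List.map_congr_left
  intro i hi
  exact h i (List.mem_range.mp hi)

theorem L_mem {f : ℕ → ℕ} {S : Finset ℕ} (hf : ∀ i, f i ∈ S) :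
    ∀ x ∈ L f m, x ∈ S := by
  intro x hx
  obtain ⟨i, _, rfl⟩ := List.mem_map.mp hx
  exact hf i

/-! ### the main positive lemma -/

theorem step_lemma {S : Finset ℕ} (h0 : 0 ∈ S) (m : ℕ)
    (ih : ∀ f : ℕ → ℕ, (∀ i, f i ∈ S) → (∀ i j, i ≤ j → f i ≤ f j) →
      Fl S (L f (m + 1)) (f (m + 1)) = Fl S (L (fun i => f (i + 1)) m) (f (m + 1)))
    (f : ℕ → ℕ) (hmem : ∀ i, f i ∈ S) (hmono : ∀ i j, i ≤ j → f i ≤ f j) :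
    Fl S (L f (m + 2)) (f (m + 2)) = Fl S (L (fun i => f (i + 1)) (m + 1)) (f (m + 2)) := by
  set g : ℕ → ℕ := fun i => if i ≤ m then f i else dop S (f (m + 1)) (f (m + 2)) with hg
  have hgmem : ∀ i, g i ∈ S := by
    intro i; by_cases h : i ≤ m <;> simp [hg, h]
    · exact hmem i
    · rw [dop_eq]; exact fl_mem h0 _
  have hle : f (m + 1) ≤ dop S (f (m + 1)) (f (m + 2)) :=
    le_fl h0 (hmem (m + 1)) (Nat.le_add_right _ _)
  have hgmono : ∀ i j, i ≤ j → g i ≤ g j := by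
    intro i j hij
    by_cases hi : i ≤ m <;> by_cases hj : j ≤ m <;> simp [hg, hi, hj]
    · exact hmono i j hij
    · exact (hmono i (m + 1) (by omega)).trans hle
    · omega
  have h1 : L g (m + 1) = L f (m + 1) := L_congr (by intro i hi; simp [hg]; omega)
  have h2 : L (fun i => g (i + 1)) m = L (fun i => f (i + 1)) m :=
    L_congr (by intro i hi; simp [hg]; omega)
  have h3 : g (m + 1) = dop S (f (m + 1)) (f (m + 2)) := by simp [hg]
  calc Fl S (L f (m + 2)) (f (m + 2))
      = Fl S (L f (m + 1)) (dop S (f (m + 1)) (f (m + 2))) := by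
        rw [L_succ, Fl_append]
    _ = Fl S (L g (m + 1)) (g (m + 1)) := by rw [h1, h3]
    _ = Fl S (L (fun i => g (i + 1)) m) (g (m + 1)) := ih g hgmem hgmono
    _ = Fl S (L (fun i => f (i + 1)) m) (dop S (f (m + 1)) (f (m + 2))) := by rw [h2, h3]
    _ = Fl S (L (fun i => f (i + 1)) (m + 1)) (f (m + 2)) := by
        rw [L_succ, Fl_append]

theorem main : ∀ k m, k + 1 ≤ m → ∀ f : ℕ → ℕ, (∀ i, f i ∈ Rcar k) →
    (∀ i j, i ≤ j → f i ≤ f j) →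
    Fl (Rcar k) (L f (m + 1)) (f (m + 1)) =
      Fl (Rcar k) (L (fun i => f (i + 1)) m) (f (m + 1)) := by
  intro k
  induction k with
  | zero =>
    intro m hm
    induction m, hm using Nat.le_induction with
    | base =>
      intro f hmem hmono
      have e1 : L f 2 = [f 0, f 1] := by simp [L, List.range_succ]
      have e2 : L (fun i => f (i + 1)) 1 = [f 1] := by simp [L, List.range_succ]
      rw [e1, e2]
      simp only [Fl_cons, Fl_nil, dop_eq, fl0]
      have h01 := hmono 0 1 (by omega)
      have h02 := hmono 0 (0 + 1 + 1) (by omega)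
      omega
    | succ m hm ih => exact step_lemma (zero_mem 0) m ih
  | succ k IHk =>
    intro m hm
    induction m, hm using Nat.le_induction with
    | base =>
      intro f hmem hmono
      set f1 : ℕ → ℕ := fun i => f (i + 1) with hf1
      have hf1e : ∀ i, f1 i = f (i + 1) := fun i => rfl
      rcases le_or_gt (f (k + 2)) (2 * Mx k) with hlow | hhigh
      · -- f 0 .. f (k+2) are all old
        have hold : ∀ i ≤ k + 2, f i ∈ Rcar k := fun i hi =>
          old_of_le (hmem i) ((hmono i (k + 2) hi).trans hlow)
        have hLmem : ∀ x ∈ L f (k + 3), x ∈ Rcar k := by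
          intro x hx
          obtain ⟨i, hi, rfl⟩ := List.mem_map.mp hx
          exact hold i (by have := List.mem_range.mp hi; omega)
        have hLmem' : ∀ x ∈ L f1 (k + 2), x ∈ Rcar k := by
          intro x hx
          obtain ⟨i, hi, rfl⟩ := List.mem_map.mp hx
          rw [hf1e]
          exact hold (i + 1) (by have := List.mem_range.mp hi; omega)
        rcases le_or_gt (f (k + 3)) (2 * Mx k) with hlow2 | hhigh2
        · -- seed is old too; reduce to level k at length k+2
          have hsd : f (k + 3) ∈ Rcar k := old_of_le (hmem (k + 3)) hlow2
          set g : ℕ → ℕ := fun i => if i ≤ k + 2 then f i else f (k + 3) with hg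
          have hgmem : ∀ i, g i ∈ Rcar k := by
            intro i; by_cases h : i ≤ k + 2 <;> simp [hg, h]
            · exact hold i h
            · exact hsd
          have hgmono : ∀ i j, i ≤ j → g i ≤ g j := by
            intro i j hij
            by_cases hi : i ≤ k + 2 <;> by_cases hj : j ≤ k + 2 <;> simp [hg, hi, hj]
            · exact hmono i j hij
            · exact hmono i (k + 3) (by omega)
            · omega
          have e1 : L g (k + 3) = L f (k + 3) := L_congr (by intro i hi; simp [hg]; omega)
          have e2 : L (fun i => g (i + 1)) (k + 2) = L f1 (k + 2) := by
            apply L_congr; intro i hi; rw [hf1e]; simp [hg]; omega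
          have e3 : g (k + 3) = f (k + 3) := by simp [hg]
          have := IHk (k + 2) (by omega) g hgmem hgmono
          rw [e1, e2, e3] at this
          rw [Fl_down k _ hLmem _ hsd, Fl_down k _ hLmem' _ hsd]
          exact this
        · -- the seed f (k+3) is a new element
          obtain ⟨s, hsmem, hseq⟩ : ∃ s ∈ Rcar k, f (k + 3) = 2 * Mx k + 1 + s := by
            rcases mem_succ.mp (hmem (k + 3)) with h' | h'
            · have := le_Mx h'; omega
            · exact h'
          rw [hseq, Fl_shift, Fl_shift]
          congr 1
          rw [show k + 3 = (k + 2) + 1 from rfl, L_succ, Fl_append]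
          rw [L_succ f1 (k + 1), Fl_append, hf1e]
          rw [show k + 1 + 1 = k + 2 from rfl]
          set g : ℕ → ℕ := fun i => if i ≤ k + 1 then f i else dop (Rcar k) (f (k + 2)) s
            with hg
          have hdmem : dop (Rcar k) (f (k + 2)) s ∈ Rcar k := by
            rw [dop_eq]; exact fl_mem (zero_mem k) _
          have hgmem : ∀ i, g i ∈ Rcar k := by
            intro i; by_cases h : i ≤ k + 1 <;> simp [hg, h]
            · exact hold i (by omega)
            · exact hdmem
          have hdge : f (k + 2) ≤ dop (Rcar k) (f (k + 2)) s :=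
            le_fl (zero_mem k) (hold (k + 2) le_rfl) (Nat.le_add_right _ _)
          have hgmono : ∀ i j, i ≤ j → g i ≤ g j := by
            intro i j hij
            by_cases hi : i ≤ k + 1 <;> by_cases hj : j ≤ k + 1 <;> simp [hg, hi, hj]
            · exact hmono i j hij
            · exact (hmono i (k + 2) (by omega)).trans hdge
            · omega
          have e1 : L g (k + 2) = L f (k + 2) := L_congr (by intro i hi; simp [hg]; omega)
          have e2 : L (fun i => g (i + 1)) (k + 1) = L f1 (k + 1) := by
            apply L_congr; intro i hi; rw [hf1e]; simp [hg]; omega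
          have e3 : g (k + 2) = dop (Rcar k) (f (k + 2)) s := by simp [hg]
          have := IHk (k + 1) le_rfl g hgmem hgmono
          rw [e1, e2, e3] at this
          exact this
      · -- f (k+2) and f (k+3) are both new: everything is the top element
        have h3 : f (k + 2) ≤ f (k + 3) := hmono _ _ (by omega)
        have hdop : dop (Rcar (k + 1)) (f (k + 2)) (f (k + 3)) = Mx (k + 1) := by
          rw [dop_eq]; exact fl_of_ge (by rw [Mx_succ]; omega)
        rw [show k + 3 = (k + 2) + 1 from rfl, L_succ, Fl_append, hdop, Fl_top]
        rw [L_succ f1 (k + 1), Fl_append, hf1e, show k + 1 + 1 = k + 2 from rfl, hdop,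
          Fl_top]
    | succ m hm ih => exact step_lemma (zero_mem (k + 1)) m ih

/-! ### positive archimedean direction -/

theorem arch_pos (k : ℕ) : archAtOn (Rcar k) (k + 2) := by
  intro f hmem hmono
  have e0 : dop (Rcar k) (f (k + 2)) 0 = f (k + 2) := by
    rw [dop_eq, Nat.add_zero, fl_eq_self (zero_mem k) (hmem (k + 2))]
  have lhs : dopSum (Rcar k) ((List.range (k + 2 + 1)).map f) =
      Fl (Rcar k) (L f (k + 2)) (f (k + 2)) := by
    rw [dopSum_eq_Fl,
      show (List.range (k + 2 + 1)).map f = L f ((k + 2) + 1) from rfl,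
      L_succ f (k + 2), Fl_append, e0]
  have rhs : dopSum (Rcar k) ((List.range (k + 2)).map (fun i => f (i + 1))) =
      Fl (Rcar k) (L (fun i => f (i + 1)) (k + 1)) (f (k + 2)) := by
    rw [dopSum_eq_Fl,
      show (List.range (k + 2)).map (fun i => f (i + 1)) =
        L (fun i => f (i + 1)) ((k + 1) + 1) from rfl,
      L_succ, Fl_append]
    congr 1
  rw [lhs, rhs]
  exact main k (k + 1) le_rfl f hmem hmono

/-! ### negative archimedean direction -/

theorem neg_small (k : ℕ) {m : ℕ} (hm : m ≤ 1) :
    dopSum (Rcar k) ((List.range (m + 1)).map (fun _ => 1)) =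
      dopSum (Rcar k) ((List.range m).map (fun _ => (1 : ℕ))) + 1 := by
  have d10 : dop (Rcar k) 1 0 = 1 := by
    rw [dop_eq, fl_eq_self (zero_mem k) (one_mem k)]
  have d11 : dop (Rcar k) 1 1 = 2 := by
    rw [dop_eq, fl_eq_self (zero_mem k) (two_mem k)]
  interval_cases m
  · simp [dopSum, d10]
  · simp [List.range_succ, dopSum, d10, d11]

theorem neg : ∀ k m, m ≤ k + 1 → ∃ f : ℕ → ℕ, (∀ i, f i ∈ Rcar k) ∧
    (∀ i j, i ≤ j → f i ≤ f j) ∧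
    dopSum (Rcar k) ((List.range (m + 1)).map f) =
      dopSum (Rcar k) ((List.range m).map (fun i => f (i + 1))) + 1 := by
  intro k
  induction k with
  | zero =>
    intro m hm
    exact ⟨fun _ => 1, fun _ => one_mem 0, fun _ _ _ => le_rfl, neg_small 0 hm⟩
  | succ k ih =>
    intro m hm
    rcases le_or_gt m 1 with hm1 | hm1
    · exact ⟨fun _ => 1, fun _ => one_mem _, fun _ _ _ => le_rfl, neg_small _ hm1⟩
    · obtain ⟨m', rfl⟩ : ∃ m', m = m' + 1 := ⟨m - 1, by omega⟩
      obtain ⟨f, hfmem, hfmono, hfeq⟩ := ih m' (by omega)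
      set g : ℕ → ℕ := fun i => if i ≤ m' then f i else 2 * Mx k + 1 with hg
      have hgmem : ∀ i, g i ∈ Rcar (k + 1) := by
        intro i; by_cases h : i ≤ m' <;> simp [hg, h]
        · exact subset_succ k (hfmem i)
        · exact mem_succ.mpr (Or.inr ⟨0, zero_mem k, by ring⟩)
      have hgmono : ∀ i j, i ≤ j → g i ≤ g j := by
        intro i j hij
        by_cases hi : i ≤ m' <;> by_cases hj : j ≤ m' <;> simp [hg, hi, hj]
        · exact hfmono i j hij
        · have := le_Mx (hfmem i); omega
        · omega
      refine ⟨g, hgmem, hgmono, ?_⟩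
      have hgm : g (m' + 1) = 2 * Mx k + 1 := by simp [hg]
      have hnewmem : (2 * Mx k + 1 : ℕ) ∈ Rcar (k + 1) :=
        mem_succ.mpr (Or.inr ⟨0, zero_mem k, by ring⟩)
      have hseed : dop (Rcar (k + 1)) (g (m' + 1)) 0 = 2 * Mx k + 1 + 0 := by
        rw [hgm, dop_eq, Nat.add_zero, fl_eq_self (zero_mem (k + 1)) hnewmem]
      have hgl : L g (m' + 1) = L f (m' + 1) := by
        apply L_congr; intro i hi; simp [hg]; omega
      have hgl' : L (fun i => g (i + 1)) m' = L (fun i => f (i + 1)) m' := by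
        apply L_congr; intro i hi; simp [hg]; omega
      have hL : dopSum (Rcar (k + 1)) ((List.range (m' + 1 + 1)).map g)
          = 2 * Mx k + 1 + dopSum (Rcar k) ((List.range (m' + 1)).map f) := by
        rw [dopSum_eq_Fl, dopSum_eq_Fl]
        show Fl (Rcar (k + 1)) (L g ((m' + 1) + 1)) 0
          = 2 * Mx k + 1 + Fl (Rcar k) (L f (m' + 1)) 0
        rw [L_succ, Fl_append, hseed, hgl, Fl_shift]
      have hR : dopSum (Rcar (k + 1)) ((List.range (m' + 1)).map (fun i => g (i + 1)))
          = 2 * Mx k + 1 + dopSum (Rcar k) ((List.range m').map (fun i => f (i + 1))) := by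
        rw [dopSum_eq_Fl, dopSum_eq_Fl]
        show Fl (Rcar (k + 1)) (L (fun i => g (i + 1)) (m' + 1)) 0
          = 2 * Mx k + 1 + Fl (Rcar k) (L (fun i => f (i + 1)) m') 0
        rw [L_succ, Fl_append]
        have hb : dop (Rcar (k + 1)) ((fun i => g (i + 1)) m') 0 = 2 * Mx k + 1 + 0 := hseed
        rw [hb, hgl', Fl_shift]
      rw [hL, hR, hfeq]
      omega

/-! ### associativity -/

theorem dop_mem (k : ℕ) (a b : ℕ) : dop (Rcar k) a b ∈ Rcar k := by
  rw [dop_eq]; exact fl_mem (zero_mem k) _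

theorem dop_le_Mx (k : ℕ) (a b : ℕ) : dop (Rcar k) a b ≤ Mx k := le_Mx (dop_mem k a b)

theorem dop_low {k : ℕ} {a b : ℕ} (ha : a ∈ Rcar k) (hb : b ∈ Rcar k) :
    dop (Rcar (k + 1)) a b = dop (Rcar k) a b := by
  rw [dop_eq, dop_eq]
  exact fl_succ_low (by have := le_Mx ha; have := le_Mx hb; omega)

theorem dop_high (k : ℕ) (a c : ℕ) :
    dop (Rcar (k + 1)) a (2 * Mx k + 1 + c) = 2 * Mx k + 1 + dop (Rcar k) a c := by
  rw [dop_eq, dop_eq, show a + (2 * Mx k + 1 + c) = 2 * Mx k + 1 + (a + c) by ring,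
    fl_succ_high]

theorem dop_comm (S : Finset ℕ) (a b : ℕ) : dop S a b = dop S b a := by
  rw [dop_eq, dop_eq, Nat.add_comm]

theorem dop_high' (k : ℕ) (a b : ℕ) :
    dop (Rcar (k + 1)) (2 * Mx k + 1 + a) b = 2 * Mx k + 1 + dop (Rcar k) a b := by
  rw [dop_comm, dop_high, dop_comm]

theorem dop_top {k : ℕ} {a b : ℕ} (h : Mx k ≤ a + b) : dop (Rcar k) a b = Mx k := by
  rw [dop_eq]; exact fl_of_ge h

theorem le_dop_left {S : Finset ℕ} (h0 : 0 ∈ S) {a : ℕ} (ha : a ∈ S) (b : ℕ) :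
    a ≤ dop S a b := by
  rw [dop_eq]; exact le_fl h0 ha (Nat.le_add_right _ _)

theorem le_dop_right {S : Finset ℕ} (h0 : 0 ∈ S) {b : ℕ} (hb : b ∈ S) (a : ℕ) :
    b ≤ dop S a b := by
  rw [dop_eq]; exact le_fl h0 hb (Nat.le_add_left _ _)

theorem assoc : ∀ k, ∀ a ∈ Rcar k, ∀ b ∈ Rcar k, ∀ c ∈ Rcar k,
    dop (Rcar k) (dop (Rcar k) a b) c = dop (Rcar k) a (dop (Rcar k) b c) := by
  intro k
  induction k with
  | zero =>
    intro a ha b hb c hc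
    have ha' : a ≤ 2 := by have := le_Mx ha; rw [Mx0] at this; omega
    have hb' : b ≤ 2 := by have := le_Mx hb; rw [Mx0] at this; omega
    have hc' : c ≤ 2 := by have := le_Mx hc; rw [Mx0] at this; omega
    simp only [dop_eq, fl0]
    omega
  | succ k IH =>
    intro a ha b hb c hc
    have htop := Mx_succ k
    rcases le_or_gt a (2 * Mx k) with hA | hA <;>
      rcases le_or_gt b (2 * Mx k) with hB | hB <;>
        rcases le_or_gt c (2 * Mx k) with hC | hC
    · -- all old
      have ha' := old_of_le ha hA
      have hb' := old_of_le hb hB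
      have hc' := old_of_le hc hC
      rw [dop_low ha' hb', dop_low (dop_mem k a b) hc', dop_low hb' hc',
        dop_low ha' (dop_mem k b c), IH a ha' b hb' c hc']
    · -- c new
      have ha' := old_of_le ha hA
      have hb' := old_of_le hb hB
      obtain ⟨c', hc'mem, rfl⟩ : ∃ r ∈ Rcar k, c = 2 * Mx k + 1 + r := by
        rcases mem_succ.mp hc with h' | h'
        · have := le_Mx h'; omega
        · exact h'
      rw [dop_low ha' hb', dop_high, dop_high, dop_high,
        IH a ha' b hb' c' hc'mem]
    · -- b new, c old
      have ha' := old_of_le ha hA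
      have hc' := old_of_le hc hC
      obtain ⟨b', hb'mem, rfl⟩ : ∃ r ∈ Rcar k, b = 2 * Mx k + 1 + r := by
        rcases mem_succ.mp hb with h' | h'
        · have := le_Mx h'; omega
        · exact h'
      rw [dop_high, dop_high', dop_high', dop_high,
        IH a ha' b' hb'mem c hc']
    · -- b, c new
      have h1 : 2 * Mx k + 1 ≤ dop (Rcar (k + 1)) a b := le_trans (by omega)
        (le_dop_right (zero_mem (k + 1)) hb a)
      have h2 : dop (Rcar (k + 1)) (dop (Rcar (k + 1)) a b) c = Mx (k + 1) :=
        dop_top (by omega)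
      have h3 : dop (Rcar (k + 1)) b c = Mx (k + 1) := dop_top (by omega)
      rw [h2, h3, dop_top (by omega)]
    · -- a new, b c old
      have hb' := old_of_le hb hB
      have hc' := old_of_le hc hC
      obtain ⟨a', ha'mem, rfl⟩ : ∃ r ∈ Rcar k, a = 2 * Mx k + 1 + r := by
        rcases mem_succ.mp ha with h' | h'
        · have := le_Mx h'; omega
        · exact h'
      rw [dop_high', dop_high', dop_low hb' hc', dop_high',
        IH a' ha'mem b hb' c hc']
    · -- a, c new
      have h1 : 2 * Mx k + 1 ≤ dop (Rcar (k + 1)) a b := le_trans (by omega)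
        (le_dop_left (zero_mem (k + 1)) ha b)
      have h2 : dop (Rcar (k + 1)) (dop (Rcar (k + 1)) a b) c = Mx (k + 1) :=
        dop_top (by omega)
      have h3 : 2 * Mx k + 1 ≤ dop (Rcar (k + 1)) b c := le_trans (by omega)
        (le_dop_right (zero_mem (k + 1)) hc b)
      rw [h2, dop_top (by omega)]
    · -- a, b new
      have h1 : dop (Rcar (k + 1)) a b = Mx (k + 1) := dop_top (by omega)
      have h3 : 2 * Mx k + 1 ≤ dop (Rcar (k + 1)) b c := le_trans (by omega)
        (le_dop_left (zero_mem (k + 1)) hb c)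
      rw [h1, dop_top (by omega), dop_top (by omega)]
    · -- all new
      have h1 : dop (Rcar (k + 1)) a b = Mx (k + 1) := dop_top (by omega)
      have h3 : 2 * Mx k + 1 ≤ dop (Rcar (k + 1)) b c := le_trans (by omega)
        (le_dop_left (zero_mem (k + 1)) hb c)
      rw [h1, dop_top (by omega), dop_top (by omega)]

/-! ### no arithmetic progressions of length 3 -/

theorem noprog : ∀ k, ∀ r ∈ Rcar k, r < dop (Rcar k) r r →
    dop (Rcar k) r (dop (Rcar k) r r) = dop (Rcar k) r r := by
  intro k
  induction k with
  | zero =>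
    intro r hr hlt
    have hr' : r ≤ 2 := by have := le_Mx hr; rw [Mx0] at this; omega
    simp only [dop_eq, fl0] at *
    omega
  | succ k IH =>
    intro r hr hlt
    rcases le_or_gt r (2 * Mx k) with hA | hA
    · have hr' := old_of_le hr hA
      rw [dop_low hr' hr'] at *
      rw [dop_low hr' (dop_mem k r r)]
      exact IH r hr' hlt
    · have h1 : dop (Rcar (k + 1)) r r = Mx (k + 1) := dop_top (by rw [Mx_succ]; omega)
      rw [h1, dop_top (by omega)]

theorem arch_min (k : ℕ) : ∀ m, archAtOn (Rcar k) m → k + 2 ≤ m := by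
  intro m harch
  by_contra hc
  push_neg at hc
  obtain ⟨f, hfmem, hfmono, hfeq⟩ := neg k m (by omega)
  have := harch f hfmem hfmono
  omega

end St16

/-- For every `n ≥ 2`, the carrier `R_n = Rcar (n-2)` with operation `dop` is a
distance monoid (closed, commutative, associative, with identity `0`,
positivity and monotone addition) of Archimedean complexity exactly `n`, yet
its longest arithmetic progression `{r < 2r < ⋯ < kr}` has length at most `2`. -/
theorem stmt16 (n : ℕ) (hn : 2 ≤ n) :
    (∀ a ∈ Rcar (n - 2), ∀ b ∈ Rcar (n - 2), dop (Rcar (n - 2)) a b ∈ Rcar (n - 2)) ∧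
    (0 : ℕ) ∈ Rcar (n - 2) ∧
    (∀ a b : ℕ, dop (Rcar (n - 2)) a b = dop (Rcar (n - 2)) b a) ∧
    (∀ a ∈ Rcar (n - 2), dop (Rcar (n - 2)) a 0 = a) ∧
    (∀ a ∈ Rcar (n - 2), ∀ b ∈ Rcar (n - 2), a ≤ dop (Rcar (n - 2)) a b) ∧
    (∀ a b c d : ℕ, a ∈ Rcar (n - 2) → b ∈ Rcar (n - 2) → c ∈ Rcar (n - 2) →
      d ∈ Rcar (n - 2) → a ≤ c → b ≤ d →
      dop (Rcar (n - 2)) a b ≤ dop (Rcar (n - 2)) c d) ∧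
    (∀ a ∈ Rcar (n - 2), ∀ b ∈ Rcar (n - 2), ∀ c ∈ Rcar (n - 2),
      dop (Rcar (n - 2)) (dop (Rcar (n - 2)) a b) c =
        dop (Rcar (n - 2)) a (dop (Rcar (n - 2)) b c)) ∧
    (archAtOn (Rcar (n - 2)) n ∧ ∀ m, archAtOn (Rcar (n - 2)) m → n ≤ m) ∧
    (∀ r ∈ Rcar (n - 2),
      ¬(dopN (Rcar (n - 2)) 1 r < dopN (Rcar (n - 2)) 2 r ∧
        dopN (Rcar (n - 2)) 2 r < dopN (Rcar (n - 2)) 3 r)) := by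
  open St16 in
  obtain ⟨k, rfl⟩ : ∃ k, n = k + 2 := ⟨n - 2, by omega⟩
  have hk : k + 2 - 2 = k := by omega
  rw [hk]
  have h0 := St16.zero_mem k
  refine ⟨?_, h0, ?_, ?_, ?_, ?_, ?_, ⟨St16.arch_pos k, St16.arch_min k⟩, ?_⟩
  · intro a _ b _; exact St16.dop_mem k a b
  · exact St16.dop_comm _
  · intro a ha
    rw [St16.dop_eq, Nat.add_zero, St16.fl_eq_self h0 ha]
  · intro a ha b _
    rw [St16.dop_eq]
    exact St16.le_fl h0 ha (Nat.le_add_right _ _)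
  · intro a b c d _ _ _ _ hac hbd
    rw [St16.dop_eq, St16.dop_eq]
    exact St16.fl_mono h0 (by omega)
  · exact St16.assoc k
  · intro r hr h
    obtain ⟨h1, h2⟩ := h
    have e1 : dopN (Rcar k) 1 r = r := by
      show dop (Rcar k) r 0 = r
      rw [St16.dop_eq, Nat.add_zero, St16.fl_eq_self h0 hr]
    have e2 : dopN (Rcar k) 2 r = dop (Rcar k) r r := by
      show dop (Rcar k) r (dopN (Rcar k) 1 r) = _
      rw [e1]
    have e3 : dopN (Rcar k) 3 r = dop (Rcar k) r (dop (Rcar k) r r) := by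
      show dop (Rcar k) r (dopN (Rcar k) 2 r) = _
      rw [e2]
    rw [e1, e2] at h1
    rw [e2, e3] at h2
    rw [St16.noprog k r hr h1] at h2
    omega
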